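/- Let n ≥ 1, let p : 2^[n] → ℂ be a distribution (∑_I p_I = 1), and let a, b ∈ ℂⁿ. Define the moments for states 0/1 by μ_I = ∑_{J ⊇ I} p_J, and the moments for states b_i/a_i by μ'_I = ∑_{J ⊆ [n]} p_J · ∏_{i ∈ I} (a_i if i ∈ J else b_i). Let k and k' be the cumulants of μ and μ' respectively, computed by k_I = ∑_{π ∈ Π(I)} (−1)^{|π|−1}(|π|−1)! ∏_{B ∈ π} μ_B. Then k'_I = k_I · ∏_{i ∈ I}(a_i − b_i) for every I ⊆ [n] with |I| ≥ 2, and k'_{{i}} = (a_i − b_i)·k_{{i}} + b_i for every i ∈ [n]. -/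

import Mathlib

open Finset

/-- The cumulants of a table `μ` indexed by subsets of `[n]`. -/
noncomputable def cumulant {n : ℕ} (μ : Finset (Fin n) → ℂ) (I : Finset (Fin n)) : ℂ :=
  ∑ π : Finpartition I,
    (-1 : ℂ) ^ (π.parts.card - 1) * (Nat.factorial (π.parts.card - 1) : ℂ) *
      ∏ B ∈ π.parts, μ B

namespace CumulantAux
variable {n : ℕ} {s : Finset (Fin n)} {j : Fin n}

def restrict (hj : j ∉ s) (π : Finpartition (insert j s)) : Finpartition s :=
  (π.avoid {j}).copy (by
    ext x
    simp only [mem_sdiff, mem_insert, mem_singleton]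
    constructor
    · rintro ⟨h1 | h1, h2⟩ <;> [exact absurd h1 h2; exact h1]
    · intro hx; exact ⟨Or.inr hx, fun h => hj (h ▸ hx)⟩)

lemma mem_restrict (hj : j ∉ s) (π : Finpartition (insert j s)) {C : Finset (Fin n)} :
    C ∈ (restrict hj π).parts ↔ ∃ d ∈ π.parts, ¬ d ⊆ {j} ∧ d.erase j = C := by
  unfold restrict
  rw [Finpartition.copy_parts]
  simp only [Finpartition.mem_avoid, le_eq_subset, ← Finset.erase_eq]

lemma not_subset_singleton {C : Finset (Fin n)} (hC : C.Nonempty) (hjC : j ∉ C) :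
    ¬ C ⊆ {j} := by
  intro hsub
  obtain ⟨x, hx⟩ := hC
  exact hjC ((Finset.mem_singleton.mp (hsub hx)) ▸ hx)

lemma not_mem_of_subset {C : Finset (Fin n)} (hj : j ∉ s) (hC : C ⊆ s) : j ∉ C :=
  fun h => hj (hC h)

def addj (hj : j ∉ s) (σ : Finpartition s)
    (B : Finset (Fin n)) (hB : B ∈ σ.parts) : Finpartition (insert j s) where
  parts := insert (insert j B) (σ.parts.erase B)
  supIndep := by
    rw [Finset.supIndep_iff_pairwiseDisjoint, coe_insert]
    refine Set.PairwiseDisjoint.insert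
      (σ.disjoint.subset (by exact_mod_cast Finset.erase_subset _ _)) ?_
    intro C hC hne
    rw [Finset.mem_coe, Finset.mem_erase] at hC
    have hCs : C ⊆ s := σ.le hC.2
    simp only [id_eq]
    rw [Finset.disjoint_insert_left]
    exact ⟨not_mem_of_subset hj hCs, σ.disjoint hB hC.2 (Ne.symm hC.1)⟩
  sup_parts := by
    have h1 : σ.parts = insert B (σ.parts.erase B) := (Finset.insert_erase hB).symm
    have h2 : id B ⊔ (σ.parts.erase B).sup id = s := by
      have := σ.sup_parts
      rw [h1, Finset.sup_insert] at this
      exact this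
    rw [Finset.sup_insert]
    simp only [id_eq] at h2 ⊢
    rw [sup_eq_union, Finset.insert_union]
    rw [sup_eq_union] at h2
    rw [h2]
  bot_notMem := by
    simp only [bot_eq_empty, mem_insert, not_or]
    exact ⟨(Finset.insert_ne_empty _ _).symm,
      fun h => σ.bot_notMem (Finset.mem_of_mem_erase h)⟩

lemma parts_addj (hj : j ∉ s) (σ : Finpartition s)
    (B : Finset (Fin n)) (hB : B ∈ σ.parts) :
    (addj hj σ B hB).parts = insert (insert j B) (σ.parts.erase B) := rfl

def extendj (hj : j ∉ s) (σ : Finpartition s) : Finpartition (insert j s) :=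
  σ.extend (b := {j}) (by simp) (Finset.disjoint_singleton_right.mpr hj)
    (by rw [sup_eq_union, Finset.union_comm]; rw [Finset.insert_eq])

lemma parts_extendj (hj : j ∉ s) (σ : Finpartition s) :
    (extendj hj σ).parts = insert {j} σ.parts := rfl

lemma restrict_extendj (hj : j ∉ s) (σ : Finpartition s) :
    restrict hj (extendj hj σ) = σ := by
  ext C
  rw [mem_restrict, parts_extendj]
  constructor
  · rintro ⟨d, hd, hd1, rfl⟩
    rcases Finset.mem_insert.mp hd with rfl | hd
    · exact absurd Finset.Subset.rfl hd1
    · rwa [Finset.erase_eq_of_notMem (not_mem_of_subset hj (σ.le hd))]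
  · intro hC
    refine ⟨C, Finset.mem_insert_of_mem hC, ?_, ?_⟩
    · exact not_subset_singleton (σ.nonempty_of_mem_parts hC) (not_mem_of_subset hj (σ.le hC))
    · exact Finset.erase_eq_of_notMem (not_mem_of_subset hj (σ.le hC))

lemma restrict_addj (hj : j ∉ s) (σ : Finpartition s)
    (B : Finset (Fin n)) (hB : B ∈ σ.parts) :
    restrict hj (addj hj σ B hB) = σ := by
  have hjB : j ∉ B := not_mem_of_subset hj (σ.le hB)
  ext C
  rw [mem_restrict, parts_addj]
  constructor
  · rintro ⟨d, hd, hd1, rfl⟩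
    rcases Finset.mem_insert.mp hd with rfl | hd
    · rwa [Finset.erase_insert hjB]
    · have hds : d ⊆ s := σ.le (Finset.mem_of_mem_erase hd)
      rw [Finset.erase_eq_of_notMem (not_mem_of_subset hj hds)]
      exact Finset.mem_of_mem_erase hd
  · intro hC
    by_cases h : C = B
    · subst h
      refine ⟨insert j C, Finset.mem_insert_self _ _, ?_, Finset.erase_insert hjB⟩
      intro hsub
      obtain ⟨x, hx⟩ := σ.nonempty_of_mem_parts hB
      have := Finset.mem_singleton.mp (hsub (Finset.mem_insert_of_mem hx))
      exact hjB (this ▸ hx)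
    · refine ⟨C, Finset.mem_insert_of_mem (Finset.mem_erase.mpr ⟨h, hC⟩), ?_, ?_⟩
      · exact not_subset_singleton (σ.nonempty_of_mem_parts hC) (not_mem_of_subset hj (σ.le hC))
      · exact Finset.erase_eq_of_notMem (not_mem_of_subset hj (σ.le hC))


/-- The inverse map: from (partition of `s`, optional part to receive `j`)
to a partition of `insert j s`. -/
def bwd (hj : j ∉ s) (x : Σ σ : Finpartition s, Option {B // B ∈ σ.parts}) :
    Finpartition (insert j s) :=
  match x with
  | ⟨σ, none⟩ => extendj hj σ
  | ⟨σ, some ⟨B, hB⟩⟩ => addj hj σ B hB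

@[simp] lemma bwd_none (hj : j ∉ s) (σ : Finpartition s) :
    bwd hj ⟨σ, none⟩ = extendj hj σ := rfl

@[simp] lemma bwd_some (hj : j ∉ s) (σ : Finpartition s) (b : {B // B ∈ σ.parts}) :
    bwd hj ⟨σ, some b⟩ = addj hj σ b.1 b.2 := rfl

lemma restrict_bwd (hj : j ∉ s) (x : Σ σ : Finpartition s, Option {B // B ∈ σ.parts}) :
    restrict hj (bwd hj x) = x.1 := by
  obtain ⟨σ, o⟩ := x
  match o with
  | none => exact restrict_extendj hj σ
  | some ⟨B, hB⟩ => exact restrict_addj hj σ B hB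

lemma singleton_mem_extendj (hj : j ∉ s) (σ : Finpartition s) :
    ({j} : Finset (Fin n)) ∈ (extendj hj σ).parts := by
  rw [parts_extendj]; exact Finset.mem_insert_self _ _

lemma singleton_not_mem_addj (hj : j ∉ s) (σ : Finpartition s)
    (B : Finset (Fin n)) (hB : B ∈ σ.parts) :
    ({j} : Finset (Fin n)) ∉ (addj hj σ B hB).parts := by
  rw [parts_addj]
  intro h
  rcases Finset.mem_insert.mp h with h | h
  · obtain ⟨x, hx⟩ := σ.nonempty_of_mem_parts hB
    have hxj : x ≠ j := fun e => not_mem_of_subset hj (σ.le hB) (e ▸ hx)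
    have : x ∈ ({j} : Finset (Fin n)) := h ▸ Finset.mem_insert_of_mem hx
    exact hxj (Finset.mem_singleton.mp this)
  · exact hj (σ.le (Finset.mem_of_mem_erase h) (Finset.mem_singleton_self j))

lemma part_j_addj (hj : j ∉ s) (σ : Finpartition s)
    (B : Finset (Fin n)) (hB : B ∈ σ.parts) :
    (addj hj σ B hB).part j = insert j B := by
  refine Finpartition.part_eq_of_mem _ ?_ (Finset.mem_insert_self j B)
  rw [parts_addj]; exact Finset.mem_insert_self _ _

lemma bwd_bijective (hj : j ∉ s) : Function.Bijective (bwd hj) := by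
  constructor
  · rintro ⟨σ₁, o₁⟩ ⟨σ₂, o₂⟩ h
    have hσ : σ₁ = σ₂ := by
      have h1 := restrict_bwd hj ⟨σ₁, o₁⟩
      have h2 := restrict_bwd hj ⟨σ₂, o₂⟩
      simp only at h1 h2
      rw [← h1, ← h2, h]
    subst hσ
    suffices ho : o₁ = o₂ by rw [ho]
    match o₁, o₂ with
    | none, none => rfl
    | none, some ⟨B, hB⟩ =>
      rw [bwd_none, bwd_some] at h
      exact absurd (h ▸ singleton_mem_extendj hj σ₁) (singleton_not_mem_addj hj σ₁ B hB)
    | some ⟨B, hB⟩, none =>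
      rw [bwd_none, bwd_some] at h
      exact absurd (h.symm ▸ singleton_mem_extendj hj σ₁) (singleton_not_mem_addj hj σ₁ B hB)
    | some ⟨B₁, hB₁⟩, some ⟨B₂, hB₂⟩ =>
      rw [bwd_some, bwd_some] at h
      have hpart : insert j B₁ = insert j B₂ := by
        rw [← part_j_addj hj σ₁ B₁ hB₁, ← part_j_addj hj σ₁ B₂ hB₂, h]
      have hB : B₁ = B₂ := by
        have e1 : j ∉ B₁ := not_mem_of_subset hj (σ₁.le hB₁)
        have e2 : j ∉ B₂ := not_mem_of_subset hj (σ₁.le hB₂)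
        rw [← Finset.erase_insert e1, hpart, Finset.erase_insert e2]
      subst hB
      rfl
  · intro π
    have hjmem : j ∈ insert j s := Finset.mem_insert_self j s
    set P := π.part j with hPdef
    have hPmem : P ∈ π.parts := π.part_mem.2 hjmem
    have hjP : j ∈ P := π.mem_part hjmem
    have huniq : ∀ d ∈ π.parts, j ∈ d → d = P :=
      fun d hd hjd => (π.part_eq_of_mem hd hjd).symm
    by_cases hP : P = {j}
    · refine ⟨⟨restrict hj π, none⟩, ?_⟩
      show extendj hj (restrict hj π) = π
      ext C
      rw [parts_extendj]
      constructor
      · intro hC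
        rcases Finset.mem_insert.mp hC with rfl | hC
        · exact hP ▸ hPmem
        · obtain ⟨d, hd, hd1, rfl⟩ := (mem_restrict hj π).mp hC
          have hjd : j ∉ d := by
            intro hjd
            exact hd1 ((huniq d hd hjd).symm ▸ hP ▸ Finset.Subset.rfl)
          rwa [Finset.erase_eq_of_notMem hjd]
      · intro hC
        by_cases h : C = {j}
        · exact h ▸ Finset.mem_insert_self _ _
        · have hjC : j ∉ C := fun hjC => h ((huniq C hC hjC).trans hP)
          refine Finset.mem_insert_of_mem ((mem_restrict hj π).mpr
            ⟨C, hC, not_subset_singleton (π.nonempty_of_mem_parts hC) hjC,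
              Finset.erase_eq_of_notMem hjC⟩)
    · have hBmem : P.erase j ∈ (restrict hj π).parts := by
        refine (mem_restrict hj π).mpr ⟨P, hPmem, ?_, rfl⟩
        intro hsub
        exact hP (Finset.Subset.antisymm hsub (Finset.singleton_subset_iff.mpr hjP))
      refine ⟨⟨restrict hj π, some ⟨P.erase j, hBmem⟩⟩, ?_⟩
      show addj hj (restrict hj π) (P.erase j) hBmem = π
      ext C
      rw [parts_addj, Finset.insert_erase hjP]
      constructor
      · intro hC
        rcases Finset.mem_insert.mp hC with rfl | hC
        · exact hPmem
        · obtain ⟨hne, hC⟩ := Finset.mem_erase.mp hC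
          obtain ⟨d, hd, hd1, rfl⟩ := (mem_restrict hj π).mp hC
          have hjd : j ∉ d := by
            intro hjd
            exact hne (by rw [huniq d hd hjd])
          rwa [Finset.erase_eq_of_notMem hjd]
      · intro hC
        by_cases h : C = P
        · exact h ▸ Finset.mem_insert_self _ _
        · have hjC : j ∉ C := fun hjC => h (huniq C hC hjC)
          refine Finset.mem_insert_of_mem (Finset.mem_erase.mpr ⟨?_, ?_⟩)
          · intro he
            obtain ⟨x, hx⟩ := π.nonempty_of_mem_parts hC
            have hxP : x ∈ P := Finset.mem_of_mem_erase (he ▸ hx)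
            exact Finset.disjoint_left.mp (π.disjoint hC hPmem h) hx hxP
          · exact (mem_restrict hj π).mpr
              ⟨C, hC, not_subset_singleton (π.nonempty_of_mem_parts hC) hjC,
                Finset.erase_eq_of_notMem hjC⟩


lemma card_parts_extendj (hj : j ∉ s) (σ : Finpartition s) :
    (extendj hj σ).parts.card = σ.parts.card + 1 := by
  rw [parts_extendj, Finset.card_insert_of_notMem]
  intro h
  exact hj (σ.le h (Finset.mem_singleton_self j))

lemma card_parts_addj (hj : j ∉ s) (σ : Finpartition s)
    (B : Finset (Fin n)) (hB : B ∈ σ.parts) :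
    (addj hj σ B hB).parts.card = (σ.parts.card - 1) + 1 := by
  rw [parts_addj, Finset.card_insert_of_notMem, Finset.card_erase_of_mem hB]
  intro h
  exact hj (σ.le (Finset.mem_of_mem_erase h) (Finset.mem_insert_self j B))

lemma cumulant_vanish (hj : j ∉ s) (hs : s.Nonempty)
    (ν : Finset (Fin n) → ℂ) (hν1 : ν {j} = 1) (hν : ∀ J ⊆ s, ν (insert j J) = ν J) :
    cumulant ν (insert j s) = 0 := by
  classical
  have hsum := Fintype.sum_bijective (bwd hj) (bwd_bijective hj)
    (fun x => (-1 : ℂ) ^ ((bwd hj x).parts.card - 1) *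
      (Nat.factorial ((bwd hj x).parts.card - 1) : ℂ) * ∏ B ∈ (bwd hj x).parts, ν B)
    (fun π => (-1 : ℂ) ^ (π.parts.card - 1) *
      (Nat.factorial (π.parts.card - 1) : ℂ) * ∏ B ∈ π.parts, ν B)
    (fun x => rfl)
  rw [cumulant, ← hsum, ← Finset.univ_sigma_univ, Finset.sum_sigma]
  refine Finset.sum_eq_zero fun σ _ => ?_
  obtain ⟨B0, hB0⟩ := σ.parts_nonempty (by simpa using hs.ne_empty)
  obtain ⟨k, hk⟩ : ∃ k, σ.parts.card = k + 1 :=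
    Nat.exists_eq_succ_of_ne_zero (Finset.card_ne_zero_of_mem hB0)
  have hprod_ext : ∏ B ∈ (extendj hj σ).parts, ν B = ∏ B ∈ σ.parts, ν B := by
    rw [parts_extendj, Finset.prod_insert (fun h => hj (σ.le h (Finset.mem_singleton_self j))),
      hν1, one_mul]
  have hprod_add : ∀ (B : Finset (Fin n)) (hB : B ∈ σ.parts),
      ∏ C ∈ (addj hj σ B hB).parts, ν C = ∏ C ∈ σ.parts, ν C := by
    intro B hB
    have hnm : insert j B ∉ σ.parts.erase B := fun h =>
      hj (σ.le (Finset.mem_of_mem_erase h) (Finset.mem_insert_self j B))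
    rw [parts_addj, Finset.prod_insert hnm, hν B (σ.le hB),
      ← Finset.prod_insert (Finset.notMem_erase B σ.parts), Finset.insert_erase hB]
  rw [Fintype.sum_option]
  simp only [bwd_none, bwd_some]
  rw [card_parts_extendj hj σ, hk]
  have hterm : ∀ b : {B // B ∈ σ.parts},
      (-1 : ℂ) ^ ((addj hj σ b.1 b.2).parts.card - 1) *
        (Nat.factorial ((addj hj σ b.1 b.2).parts.card - 1) : ℂ) *
        ∏ B ∈ (addj hj σ b.1 b.2).parts, ν B =
      (-1 : ℂ) ^ k * (Nat.factorial k : ℂ) * ∏ B ∈ σ.parts, ν B := by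
    rintro ⟨B, hB⟩
    rw [card_parts_addj hj σ B hB, hk, hprod_add B hB]
    simp
  rw [Finset.sum_congr rfl (fun b _ => hterm b), Finset.sum_const, Finset.card_univ,
    Fintype.card_coe, hk, hprod_ext]
  simp only [Nat.add_sub_cancel, nsmul_eq_mul]
  push_cast [Nat.factorial_succ]
  ring


lemma prod_ite_subset (J' T : Finset (Fin n)) (c : Fin n → ℂ) :
    ∏ i ∈ T, (if i ∈ J' then c i else 0) = if T ⊆ J' then ∏ i ∈ T, c i else 0 := by
  by_cases h : T ⊆ J'
  · rw [if_pos h]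
    exact Finset.prod_congr rfl fun i hi => if_pos (h hi)
  · rw [if_neg h]
    obtain ⟨x, hxT, hxJ⟩ := Finset.not_subset.mp h
    exact Finset.prod_eq_zero hxT (if_neg hxJ)

lemma mu'_expand {p μ μ' : Finset (Fin n) → ℂ} {a b : Fin n → ℂ}
    (hμ : ∀ I : Finset (Fin n), μ I = ∑ J ∈ univ.filter (fun J => I ⊆ J), p J)
    (hμ' : ∀ I : Finset (Fin n),
      μ' I = ∑ J : Finset (Fin n), p J * ∏ i ∈ I, (if i ∈ J then a i else b i))
    (J : Finset (Fin n)) :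
    μ' J = ∑ T ∈ J.powerset,
      (∏ i ∈ T, (a i - b i)) * (∏ i ∈ J \ T, b i) * μ T := by
  rw [hμ']
  have step1 : ∀ J' : Finset (Fin n),
      p J' * ∏ i ∈ J, (if i ∈ J' then a i else b i) =
      ∑ T ∈ J.powerset, (if T ⊆ J' then p J' * ((∏ i ∈ T, (a i - b i)) * ∏ i ∈ J \ T, b i)
        else 0) := by
    intro J'
    have : ∏ i ∈ J, (if i ∈ J' then a i else b i) =
        ∏ i ∈ J, ((if i ∈ J' then a i - b i else 0) + b i) := by
      refine Finset.prod_congr rfl fun i _ => ?_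
      by_cases h : i ∈ J' <;> simp [h]
    rw [this, Finset.prod_add, Finset.mul_sum]
    refine Finset.sum_congr rfl fun T _ => ?_
    rw [prod_ite_subset]
    by_cases h : T ⊆ J' <;> simp [h, mul_assoc]
  rw [Finset.sum_congr rfl fun J' _ => step1 J', Finset.sum_comm]
  refine Finset.sum_congr rfl fun T _ => ?_
  rw [← Finset.sum_filter, ← Finset.sum_mul, ← hμ T]
  ring


lemma prod_parts_expand {p μ μ' : Finset (Fin n) → ℂ} {a b : Fin n → ℂ}
    (hμ : ∀ I : Finset (Fin n), μ I = ∑ J ∈ univ.filter (fun J => I ⊆ J), p J)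
    (hμ' : ∀ I : Finset (Fin n),
      μ' I = ∑ J : Finset (Fin n), p J * ∏ i ∈ I, (if i ∈ J then a i else b i))
    {I : Finset (Fin n)} (π : Finpartition I) :
    ∏ B ∈ π.parts, μ' B = ∑ T ∈ I.powerset,
      (∏ i ∈ T, (a i - b i)) * (∏ i ∈ I \ T, b i) * ∏ B ∈ π.parts, μ (T ∩ B) := by
  classical
  rw [Finset.prod_congr rfl (fun B _ => mu'_expand hμ hμ' B), Finset.prod_sum]
  refine Finset.sum_bij'
    (i := fun g _ => π.parts.attach.biUnion fun B => g B.1 B.2)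
    (j := fun T _ => fun B _ => T ∩ B) ?_ ?_ ?_ ?_ ?_
  · -- hi
    intro g hg
    rw [Finset.mem_powerset]
    refine Finset.biUnion_subset.mpr fun B _ => ?_
    have := (Finset.mem_pi.mp hg) B.1 B.2
    exact (Finset.mem_powerset.mp this).trans (π.le B.2)
  · -- hj
    intro T _
    rw [Finset.mem_pi]
    intro B _
    exact Finset.mem_powerset.mpr Finset.inter_subset_right
  · -- left_inv
    intro g hg
    have hsub : ∀ (B : Finset (Fin n)) (hB : B ∈ π.parts), g B hB ⊆ B :=
      fun B hB => Finset.mem_powerset.mp ((Finset.mem_pi.mp hg) B hB)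
    funext B hB
    ext x
    simp only [Finset.mem_inter, Finset.mem_biUnion, Finset.mem_attach, true_and,
      Subtype.exists]
    constructor
    · rintro ⟨⟨C, hC, hx⟩, hxB⟩
      have hBC : C = B := π.eq_of_mem_parts hC hB (hsub C hC hx) hxB
      subst hBC
      exact hx
    · intro hx
      exact ⟨⟨B, hB, hx⟩, hsub B hB hx⟩
  · -- right_inv
    intro T hT
    ext x
    simp only [Finset.mem_biUnion, Finset.mem_attach, true_and, Subtype.exists,
      Finset.mem_inter]
    constructor
    · rintro ⟨C, hC, hx, _⟩
      exact hx
    · intro hx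
      obtain ⟨C, hC, hxC⟩ := π.exists_mem (Finset.mem_powerset.mp hT hx)
      exact ⟨C, hC, hx, hxC⟩
  · -- values
    intro g hg
    have hsub : ∀ (B : Finset (Fin n)) (hB : B ∈ π.parts), g B hB ⊆ B :=
      fun B hB => Finset.mem_powerset.mp ((Finset.mem_pi.mp hg) B hB)
    set T := π.parts.attach.biUnion fun B => g B.1 B.2 with hT
    have hdisj : ∀ B₁ ∈ π.parts.attach, ∀ B₂ ∈ π.parts.attach, B₁ ≠ B₂ →
        Disjoint (g B₁.1 B₁.2) (g B₂.1 B₂.2) := by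
      intro B₁ _ B₂ _ hne
      exact Disjoint.mono (hsub B₁.1 B₁.2) (hsub B₂.1 B₂.2)
        (π.disjoint B₁.2 B₂.2 (fun h => hne (Subtype.ext h)))
    have hinter : ∀ (B : Finset (Fin n)) (hB : B ∈ π.parts), T ∩ B = g B hB := by
      intro B hB
      ext x
      simp only [hT, Finset.mem_inter, Finset.mem_biUnion, Finset.mem_attach, true_and,
        Subtype.exists]
      constructor
      · rintro ⟨⟨C, hC, hx⟩, hxB⟩
        have hBC : C = B := π.eq_of_mem_parts hC hB (hsub C hC hx) hxB
        subst hBC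
        exact hx
      · intro hx
        exact ⟨⟨B, hB, hx⟩, hsub B hB hx⟩
    rw [Finset.prod_mul_distrib, Finset.prod_mul_distrib]
    congr 1
    · congr 1
      · -- products of c over the chosen sets
        rw [← Finset.prod_biUnion hdisj]
      · -- products of b over complements
        rw [← Finset.prod_biUnion (t := fun B : {x // x ∈ π.parts} => B.1 \ g B.1 B.2)]
        · congr 1
          ext x
          simp only [Finset.mem_biUnion, Finset.mem_attach, true_and, Subtype.exists,
            Finset.mem_sdiff, hT]
          constructor
          · rintro ⟨C, hC, hxC, hxg⟩
            refine ⟨π.le hC hxC, ?_⟩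
            rintro ⟨C', hC', hxg'⟩
            have : C' = C := π.eq_of_mem_parts hC' hC (hsub C' hC' hxg') hxC
            exact hxg (this ▸ hxg')
          · rintro ⟨hxI, hxT⟩
            obtain ⟨C, hC, hxC⟩ := π.exists_mem hxI
            exact ⟨C, hC, hxC, fun hxg => hxT ⟨C, hC, hxg⟩⟩
        · intro B₁ _ B₂ _ hne
          exact Disjoint.mono (Finset.sdiff_subset) (Finset.sdiff_subset)
            (π.disjoint B₁.2 B₂.2 (fun h => hne (Subtype.ext h)))
    · -- products of μ
      rw [← Finset.prod_attach π.parts fun B => μ (T ∩ B)]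
      exact Finset.prod_congr rfl fun B _ => by rw [hinter B.1 B.2]


lemma cumulant_singleton (ν : Finset (Fin n) → ℂ) (i : Fin n) :
    cumulant ν {i} = ν {i} := by
  have hparts : ∀ π : Finpartition ({i} : Finset (Fin n)),
      π.parts = {({i} : Finset (Fin n))} := by
    intro π
    have h : ∀ C ∈ π.parts, C = {i} := by
      intro C hC
      have hsub : C ⊆ {i} := π.le hC
      rw [Finset.subset_singleton_iff] at hsub
      exact hsub.resolve_left (π.nonempty_of_mem_parts hC).ne_empty
    obtain ⟨C, hC⟩ := π.parts_nonempty (by simp)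
    ext D
    simp only [Finset.mem_singleton]
    exact ⟨h D, by rintro rfl; exact (h C hC) ▸ hC⟩
  haveI : Unique (Finpartition ({i} : Finset (Fin n))) :=
    IsAtom.uniqueFinpartition (P := Finpartition.indiscrete (by simp))
      (Finset.isAtom_singleton i)
  rw [cumulant, Fintype.sum_unique, hparts default]
  simp

lemma cumulant_inter_self (μ : Finset (Fin n) → ℂ) (I : Finset (Fin n)) :
    cumulant (fun J => μ (I ∩ J)) I = cumulant μ I := by
  rw [cumulant, cumulant]
  refine Finset.sum_congr rfl fun π _ => ?_
  congr 1
  exact Finset.prod_congr rfl fun B hB => by rw [Finset.inter_eq_right.mpr (π.le hB)]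

end CumulantAux

open CumulantAux

/-- changing the values of the binary variables from `0/1` to `b_i/a_i`
rescales the higher cumulants by `∏_{i∈I}(a_i − b_i)` and transforms first-order
cumulants affinely. -/
theorem cumulants_change_of_states {n : ℕ} (hn : 1 ≤ n)
    (p : Finset (Fin n) → ℂ) (hp : ∑ I : Finset (Fin n), p I = 1)
    (a b : Fin n → ℂ)
    (μ μ' : Finset (Fin n) → ℂ)
    (hμ : ∀ I : Finset (Fin n), μ I = ∑ J ∈ univ.filter (fun J => I ⊆ J), p J)
    (hμ' : ∀ I : Finset (Fin n),
      μ' I = ∑ J : Finset (Fin n), p J * ∏ i ∈ I, (if i ∈ J then a i else b i)) :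
    (∀ I : Finset (Fin n), 2 ≤ I.card →
        cumulant μ' I = cumulant μ I * ∏ i ∈ I, (a i - b i)) ∧
    (∀ i : Fin n, cumulant μ' {i} = (a i - b i) * cumulant μ {i} + b i) := by
  classical
  have hμ0 : μ ∅ = 1 := by
    rw [hμ, Finset.filter_true_of_mem (fun J _ => Finset.empty_subset J), hp]
  constructor
  · intro I hI
    have key : cumulant μ' I = ∑ T ∈ I.powerset,
        ((∏ i ∈ T, (a i - b i)) * (∏ i ∈ I \ T, b i)) *
          cumulant (fun J => μ (T ∩ J)) I := by
      rw [cumulant]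
      have step : ∀ π : Finpartition I,
          (-1 : ℂ) ^ (π.parts.card - 1) * (Nat.factorial (π.parts.card - 1) : ℂ) *
            ∏ B ∈ π.parts, μ' B =
          ∑ T ∈ I.powerset, ((∏ i ∈ T, (a i - b i)) * (∏ i ∈ I \ T, b i)) *
            ((-1 : ℂ) ^ (π.parts.card - 1) * (Nat.factorial (π.parts.card - 1) : ℂ) *
              ∏ B ∈ π.parts, μ (T ∩ B)) := by
        intro π
        rw [prod_parts_expand hμ hμ' π, Finset.mul_sum]
        exact Finset.sum_congr rfl fun T _ => by ring
      rw [Finset.sum_congr rfl (fun π _ => step π), Finset.sum_comm]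
      refine Finset.sum_congr rfl fun T _ => ?_
      rw [cumulant, Finset.mul_sum]
    rw [key]
    rw [Finset.sum_eq_single_of_mem I (Finset.mem_powerset_self I)]
    · rw [cumulant_inter_self, Finset.sdiff_self, Finset.prod_empty, mul_one]
      ring
    · intro T hT hne
      have hTI : T ⊆ I := Finset.mem_powerset.mp hT
      obtain ⟨j, hjI, hjT⟩ := Finset.exists_of_ssubset (HasSubset.Subset.ssubset_of_ne hTI hne)
      have hjs : j ∉ I.erase j := Finset.notMem_erase j I
      have hins : insert j (I.erase j) = I := Finset.insert_erase hjI
      have hsn : (I.erase j).Nonempty := by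
        rw [← Finset.card_pos, Finset.card_erase_of_mem hjI]
        omega
      have hvan : cumulant (fun J => μ (T ∩ J)) I = 0 := by
        rw [← hins]
        refine cumulant_vanish hjs hsn _ ?_ ?_
        · rw [Finset.inter_singleton_of_notMem hjT, hμ0]
        · intro J _
          have : T ∩ insert j J = T ∩ J := by
            rw [Finset.inter_comm, Finset.insert_inter_of_notMem hjT, Finset.inter_comm]
          rw [this]
      rw [hvan, mul_zero]
  · intro i
    have hpow : ({i} : Finset (Fin n)).powerset = {∅, {i}} := by
      ext T
      simp [Finset.subset_singleton_iff]
    rw [cumulant_singleton, cumulant_singleton, mu'_expand hμ hμ' {i}, hpow,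
      Finset.sum_insert (by
        intro h
        simp only [Finset.mem_singleton] at h
        exact (Finset.singleton_ne_empty i) h.symm)]
    simp [hμ0]
    ring
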